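/- Let f : ℝ² → ℝ be smooth, let a^f(x,y,p) = f_xx(x,y) + 2f_xy(x,y)p + f_yy(x,y)p², and let I(x,y,p) = (a^f)_x(x,y,p) + p·(a^f)_y(x,y,p). Suppose the origin lies on the criminant of the asymptotic IDE, i.e. a^f(0,0,0) = 0 and (a^f)_p(0,0,0) = 0, and suppose the flec-surface of a^f has vertical tangent plane at the origin, i.e. I(0,0,0) = 0 and ∂I/∂p (0,0,0) = 0. Then the origin is a critical point of a^f: (a^f)_x(0,0,0) = (a^f)_y(0,0,0) = (a^f)_p(0,0,0) = 0. -/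

import Mathlib

noncomputable section

/-- Partial derivative in the first variable of a function on `ℝ × ℝ`. -/
def pdx (f : ℝ × ℝ → ℝ) (q : ℝ × ℝ) : ℝ := deriv (fun t => f (t, q.2)) q.1

/-- Partial derivative in the second variable of a function on `ℝ × ℝ`. -/
def pdy (f : ℝ × ℝ → ℝ) (q : ℝ × ℝ) : ℝ := deriv (fun t => f (q.1, t)) q.2

/-- Partial derivative in `x` of a function on `ℝ × ℝ × ℝ` (coordinates `(x, y, p)`). -/
def pDx (F : ℝ × ℝ × ℝ → ℝ) (q : ℝ × ℝ × ℝ) : ℝ := deriv (fun t => F (t, q.2.1, q.2.2)) q.1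

/-- Partial derivative in `y` of a function on `ℝ × ℝ × ℝ` (coordinates `(x, y, p)`). -/
def pDy (F : ℝ × ℝ × ℝ → ℝ) (q : ℝ × ℝ × ℝ) : ℝ := deriv (fun t => F (q.1, t, q.2.2)) q.2.1

/-- Partial derivative in `p` of a function on `ℝ × ℝ × ℝ` (coordinates `(x, y, p)`). -/
def pDp (F : ℝ × ℝ × ℝ → ℝ) (q : ℝ × ℝ × ℝ) : ℝ := deriv (fun t => F (q.1, q.2.1, t)) q.2.2

/-- The asymptotic IDE function `a^f(x,y,p) = f_xx + 2 f_xy p + f_yy p²`. -/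
def aIDE (f : ℝ × ℝ → ℝ) (q : ℝ × ℝ × ℝ) : ℝ :=
  pdx (pdx f) (q.1, q.2.1) + 2 * pdy (pdx f) (q.1, q.2.1) * q.2.2
    + pdy (pdy f) (q.1, q.2.1) * q.2.2 ^ 2

/-- The inflection function `I^F(x,y,p) = F_x + p·F_y`; its zero set is the flec-surface. -/
def inflFun (F : ℝ × ℝ × ℝ → ℝ) (q : ℝ × ℝ × ℝ) : ℝ := pDx F q + q.2.2 * pDy F q

-- Auxiliary lemmas
lemma pdx_eq (g : ℝ × ℝ → ℝ) (hg : Differentiable ℝ g) (q : ℝ × ℝ) :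
    pdx g q = fderiv ℝ g q (1, 0) := by
  have h1 : HasDerivAt (fun t : ℝ => (t, q.2)) ((1 : ℝ), (0 : ℝ)) q.1 := by
    simpa using (hasDerivAt_id q.1).prodMk (hasDerivAt_const q.1 q.2)
  have h2 := (hg (q.1, q.2)).hasFDerivAt
  have h : HasDerivAt (fun t => g (t, q.2)) (fderiv ℝ g q (1, 0)) q.1 := by
    exact h2.comp_hasDerivAt q.1 h1
  exact h.deriv
lemma pdy_eq (g : ℝ × ℝ → ℝ) (hg : Differentiable ℝ g) (q : ℝ × ℝ) :
    pdy g q = fderiv ℝ g q (0, 1) := by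
  have h1 : HasDerivAt (fun t : ℝ => (q.1, t)) ((0 : ℝ), (1 : ℝ)) q.2 := by
    simpa using (hasDerivAt_const q.2 q.1).prodMk (hasDerivAt_id q.2)
  have h2 := (hg (q.1, q.2)).hasFDerivAt
  have h : HasDerivAt (fun t => g (q.1, t)) (fderiv ℝ g q (0, 1)) q.2 := by
    exact h2.comp_hasDerivAt q.2 h1
  exact h.deriv
lemma contDiff_pdx (g : ℝ × ℝ → ℝ) (hg : ContDiff ℝ (⊤ : ℕ∞) g) :
    ContDiff ℝ (⊤ : ℕ∞) (pdx g) := by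
  have : pdx g = fun q => fderiv ℝ g q (1, 0) :=
    funext (pdx_eq g (hg.differentiable (by simp)))
  rw [this]
  exact (hg.fderiv_right (mod_cast le_top)).clm_apply contDiff_const
lemma contDiff_pdy (g : ℝ × ℝ → ℝ) (hg : ContDiff ℝ (⊤ : ℕ∞) g) :
    ContDiff ℝ (⊤ : ℕ∞) (pdy g) := by
  have : pdy g = fun q => fderiv ℝ g q (0, 1) :=
    funext (pdy_eq g (hg.differentiable (by simp)))
  rw [this]
  exact (hg.fderiv_right (mod_cast le_top)).clm_apply contDiff_const
lemma pdx_pdy_comm (g : ℝ × ℝ → ℝ) (hg : ContDiff ℝ (⊤ : ℕ∞) g) (q : ℝ × ℝ) :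
    pdx (pdy g) q = pdy (pdx g) q := by
  have hdg : Differentiable ℝ g := hg.differentiable (by simp)
  have hfd : ContDiff ℝ (⊤ : ℕ∞) (fderiv ℝ g) := hg.fderiv_right (mod_cast le_top)
  have hfd' : Differentiable ℝ (fderiv ℝ g) := hfd.differentiable (by simp)
  have key : ∀ v w : ℝ × ℝ,
      fderiv ℝ (fun z => fderiv ℝ g z v) q w = fderiv ℝ (fderiv ℝ g) q w v := by
    intro v w
    rw [fderiv_clm_apply (hfd' q) (differentiableAt_const v)]
    simp
  have e1 : pdx (pdy g) q = fderiv ℝ (fderiv ℝ g) q (1, 0) (0, 1) := by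
    rw [pdx_eq _ ((contDiff_pdy g hg).differentiable (by simp))]
    have h : pdy g = fun z => fderiv ℝ g z (0, 1) := funext (pdy_eq g hdg)
    rw [h, key]
  have e2 : pdy (pdx g) q = fderiv ℝ (fderiv ℝ g) q (0, 1) (1, 0) := by
    rw [pdy_eq _ ((contDiff_pdx g hg).differentiable (by simp))]
    have h : pdx g = fun z => fderiv ℝ g z (1, 0) := funext (pdx_eq g hdg)
    rw [h, key]
  rw [e1, e2]
  exact second_derivative_symmetric (fun y => (hdg y).hasFDerivAt)
    ((hfd' q).hasFDerivAt) _ _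

lemma sliceX (g : ℝ × ℝ → ℝ) (hg : ContDiff ℝ (⊤ : ℕ∞) g) :
    HasDerivAt (fun t => g (t, (0 : ℝ))) (pdx g (0, 0)) 0 := by
  have hd : DifferentiableAt ℝ (fun t : ℝ => g (t, 0)) 0 :=
    ((hg.differentiable (by simp)).comp
      (differentiable_id.prodMk (differentiable_const (0 : ℝ)))) 0
  exact hd.hasDerivAt
lemma sliceY (g : ℝ × ℝ → ℝ) (hg : ContDiff ℝ (⊤ : ℕ∞) g) :
    HasDerivAt (fun t => g ((0 : ℝ), t)) (pdy g (0, 0)) 0 := by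
  have hd : DifferentiableAt ℝ (fun t : ℝ => g (0, t)) 0 :=
    ((hg.differentiable (by simp)).comp
      ((differentiable_const (0 : ℝ)).prodMk differentiable_id)) 0
  exact hd.hasDerivAt

lemma polyDeriv (a1 a2 a3 b1 b2 b3 : ℝ) :
    HasDerivAt (fun p : ℝ => a1 + 2 * a2 * p + a3 * p ^ 2 + p * (b1 + 2 * b2 * p + b3 * p ^ 2))
      (2 * a2 + b1) 0 := by
  have hA' : HasDerivAt (fun _ : ℝ => a1) 0 0 := hasDerivAt_const 0 a1
  have hB' : HasDerivAt (fun p : ℝ => 2 * a2 * p) (2 * a2) 0 := by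
    simpa using (hasDerivAt_id (0 : ℝ)).const_mul (2 * a2)
  have hC' : HasDerivAt (fun p : ℝ => a3 * p ^ 2) 0 0 := by
    simpa using ((hasDerivAt_pow 2 (0 : ℝ))).const_mul a3
  have hB2 : HasDerivAt (fun p : ℝ => 2 * b2 * p) (2 * b2) 0 := by
    simpa using (hasDerivAt_id (0 : ℝ)).const_mul (2 * b2)
  have hC2 : HasDerivAt (fun p : ℝ => b3 * p ^ 2) 0 0 := by
    simpa using ((hasDerivAt_pow 2 (0 : ℝ))).const_mul b3
  have hq : HasDerivAt (fun p : ℝ => b1 + 2 * b2 * p + b3 * p ^ 2) (2 * b2) 0 := by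
    have := ((hasDerivAt_const (0 : ℝ) b1).add hB2).add hC2
    exact this.congr_deriv (by simp)
  have h4 : HasDerivAt (fun p : ℝ => p * (b1 + 2 * b2 * p + b3 * p ^ 2)) b1 0 := by
    have := (hasDerivAt_id (0 : ℝ)).mul hq
    exact this.congr_deriv (by simp)
  have := ((hA'.add hB').add hC').add h4
  exact this.congr_deriv (by simp)


/-- Lemma G: if the origin lies on the criminant of the asymptotic IDE and
the flec-surface of `a^f` has vertical tangent plane there, then the origin is a critical
point of `a^f`. -/
theorem lemmaG (f : ℝ × ℝ → ℝ) (hf : ContDiff ℝ (⊤ : ℕ∞) f)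
    (h0 : aIDE f (0, 0, 0) = 0)
    (hp : pDp (aIDE f) (0, 0, 0) = 0)
    (hI : inflFun (aIDE f) (0, 0, 0) = 0)
    (hIp : pDp (inflFun (aIDE f)) (0, 0, 0) = 0) :
    pDx (aIDE f) (0, 0, 0) = 0 ∧ pDy (aIDE f) (0, 0, 0) = 0 ∧
      pDp (aIDE f) (0, 0, 0) = 0 := by
  set A := pdx (pdx f) with hAdef
  set B := pdy (pdx f) with hBdef
  set C := pdy (pdy f) with hCdef
  have hfx : ContDiff ℝ (⊤ : ℕ∞) (pdx f) := contDiff_pdx f hf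
  have hfy : ContDiff ℝ (⊤ : ℕ∞) (pdy f) := contDiff_pdy f hf
  have hA : ContDiff ℝ (⊤ : ℕ∞) A := contDiff_pdx _ hfx
  have hB : ContDiff ℝ (⊤ : ℕ∞) B := contDiff_pdy _ hfx
  have hC : ContDiff ℝ (⊤ : ℕ∞) C := contDiff_pdy _ hfy
  -- x-derivative of aIDE along the x-axis
  have hDx : ∀ p : ℝ, pDx (aIDE f) (0, 0, p)
      = pdx A (0, 0) + 2 * pdx B (0, 0) * p + pdx C (0, 0) * p ^ 2 := by
    intro p
    have h : HasDerivAt (fun t => A (t, 0) + 2 * B (t, 0) * p + C (t, 0) * p ^ 2)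
        (pdx A (0, 0) + 2 * pdx B (0, 0) * p + pdx C (0, 0) * p ^ 2) 0 :=
      (((sliceX A hA).add (((sliceX B hB).const_mul 2).mul_const p)).add
        ((sliceX C hC).mul_const (p ^ 2)))
    exact h.deriv
  have hDy : ∀ p : ℝ, pDy (aIDE f) (0, 0, p)
      = pdy A (0, 0) + 2 * pdy B (0, 0) * p + pdy C (0, 0) * p ^ 2 := by
    intro p
    have h : HasDerivAt (fun t => A (0, t) + 2 * B (0, t) * p + C (0, t) * p ^ 2)
        (pdy A (0, 0) + 2 * pdy B (0, 0) * p + pdy C (0, 0) * p ^ 2) 0 :=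
      (((sliceY A hA).add (((sliceY B hB).const_mul 2).mul_const p)).add
        ((sliceY C hC).mul_const (p ^ 2)))
    exact h.deriv
  -- first conclusion
  have eI : inflFun (aIDE f) (0, 0, 0)
      = pDx (aIDE f) (0, 0, 0) + 0 * pDy (aIDE f) (0, 0, 0) := rfl
  have hx0 : pDx (aIDE f) (0, 0, 0) = 0 := by
    rw [eI] at hI; simpa using hI
  have hAx0 : pdx A (0, 0) = 0 := by
    have := hDx 0; rw [hx0] at this; simpa using this.symm
  -- second conclusion via the vertical-tangency condition
  have hfun : (fun p : ℝ => inflFun (aIDE f) (0, 0, p))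
      = fun p : ℝ => pdx A (0, 0) + 2 * pdx B (0, 0) * p + pdx C (0, 0) * p ^ 2
          + p * (pdy A (0, 0) + 2 * pdy B (0, 0) * p + pdy C (0, 0) * p ^ 2) := by
    funext p
    have e : inflFun (aIDE f) (0, 0, p)
        = pDx (aIDE f) (0, 0, p) + p * pDy (aIDE f) (0, 0, p) := rfl
    rw [e, hDx p, hDy p]
  have hkey : 2 * pdx B (0, 0) + pdy A (0, 0) = 0 := by
    have hder := (polyDeriv (pdx A (0, 0)) (pdx B (0, 0)) (pdx C (0, 0))
      (pdy A (0, 0)) (pdy B (0, 0)) (pdy C (0, 0))).deriv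
    rw [← hfun] at hder
    have e : pDp (inflFun (aIDE f)) (0, 0, 0)
        = deriv (fun p : ℝ => inflFun (aIDE f) (0, 0, p)) 0 := rfl
    rw [e, hder] at hIp
    exact hIp
  have hsymm : pdx B (0, 0) = pdy A (0, 0) := pdx_pdy_comm (pdx f) hfx (0, 0)
  have hAy0 : pdy A (0, 0) = 0 := by rw [hsymm] at hkey; linarith
  have hy0 : pDy (aIDE f) (0, 0, 0) = 0 := by
    rw [hDy 0, hAy0]; norm_num
  exact ⟨hx0, hy0, hp⟩
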